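/- The family 𝒥 of unions of two adjacent triadic intervals of equal length splits into two triadic lattices: 𝒥 = 𝒯¹ ∪ 𝒯², where each 𝒯^i is a collection of half-open intervals of lengths 2·3^j (j ∈ ℤ) such that any two members are nested or disjoint and each member of length 2·3^{j+1} contains exactly three members of length 2·3^j partitioning it. -/

import Mathlib

open MeasureTheory ENNReal

/-- A triadic lattice on `ℝ`: a collection of half-open intervals such that any two
members are nested or disjoint, each member is partitioned into its three thirds (its
children), which again belong to the lattice, and each member has a parent in the
lattice of three times its length. -/
structure IsTriadicLattice (𝔗 : Set (Set ℝ)) : Prop where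
  shape : ∀ I ∈ 𝔗, ∃ a b : ℝ, a < b ∧ I = Set.Ico a b
  nested_or_disjoint : ∀ I ∈ 𝔗, ∀ J ∈ 𝔗, I ⊆ J ∨ J ⊆ I ∨ Disjoint I J
  children : ∀ a b : ℝ, Set.Ico a b ∈ 𝔗 →
    Set.Ico a (a + (b - a)/3) ∈ 𝔗 ∧
    Set.Ico (a + (b - a)/3) (a + 2*(b - a)/3) ∈ 𝔗 ∧
    Set.Ico (a + 2*(b - a)/3) b ∈ 𝔗
  parent : ∀ a b : ℝ, Set.Ico a b ∈ 𝔗 →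
    ∃ c d : ℝ, Set.Ico c d ∈ 𝔗 ∧ Set.Ico a b ⊆ Set.Ico c d ∧ d - c = 3*(b - a)

/-- The maximal operator associated to a family `𝔗` of intervals:
`M^𝔗 f(x) = sup_{J ∈ 𝔗, J ∋ x} (1/|J|)∫_J |f|`. -/
noncomputable def maxOpT (𝔗 : Set (Set ℝ)) (f : ℝ → ℝ) (x : ℝ) : ℝ≥0∞ :=
  ⨆ (J : Set ℝ) (_ : J ∈ 𝔗) (_ : x ∈ J),
    (∫⁻ y in J, ENNReal.ofReal |f y|) / volume J

/-- The family `𝒥` of unions of two adjacent triadic intervals of equal length. -/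
def familyJ : Set (Set ℝ) :=
  {S | ∃ j n : ℤ, S = Set.Ico ((3:ℝ)^j * n) ((3:ℝ)^j * (n + 2))}


namespace TriadicSplit

/-- The triadic lattice with parity `p`. -/
def T (p : ℤ) : Set (Set ℝ) :=
  {S | ∃ j n : ℤ, n % 2 = p ∧ S = Set.Ico ((3:ℝ)^j * n) ((3:ℝ)^j * (n + 2))}

lemma zp (j : ℤ) : (0:ℝ) < 3 ^ j := zpow_pos (by norm_num) j

lemma endlt (j n : ℤ) : (3:ℝ)^j * n < 3^j * (n + 2) := by
  have h : ((n:ℝ)) < (n:ℝ) + 2 := by linarith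
  calc (3:ℝ)^j * n < 3^j * ((n:ℝ) + 2) := by nlinarith [zp j]
    _ = 3^j * ((n:ℝ) + 2) := rfl

lemma mem_T {p : ℤ} {a b : ℝ} (h : Set.Ico a b ∈ T p) :
    ∃ j n : ℤ, n % 2 = p ∧ a = 3^j * n ∧ b = 3^j * (n + 2) := by
  obtain ⟨j, n, hp, hS⟩ := h
  rw [Set.Ico_eq_Ico_iff (Or.inr (endlt j n))] at hS
  exact ⟨j, n, hp, hS.1, hS.2⟩

lemma rep_unique {j j' n n' : ℤ} (h1 : (3:ℝ)^j * n = 3^j' * n')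
    (h2 : (3:ℝ)^j * ((n:ℝ) + 2) = 3^j' * ((n':ℝ) + 2)) : j = j' ∧ n = n' := by
  have h3 : (3:ℝ)^j = 3^j' := by linear_combination (h2 - h1)/2
  have hj : j = j' := zpow_right_injective₀ (by norm_num : (0:ℝ) < 3) (by norm_num) h3
  subst hj
  have hn : (n:ℝ) = n' := mul_left_cancel₀ (ne_of_gt (zp j)) h1
  exact ⟨rfl, by exact_mod_cast hn⟩

lemma disj {a b c d : ℝ} (h : b ≤ c) : Disjoint (Set.Ico a b) (Set.Ico c d) := by
  apply Set.disjoint_left.mpr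
  rintro x ⟨_, h2⟩ ⟨h3, _⟩
  linarith

lemma int_key {M N n' : ℤ} (hM : Even M) (hM2 : 2 ≤ M) (h : Even (n' - N)) :
    (N ≤ n' ∧ n' + 2 ≤ N + M) ∨ n' + 2 ≤ N ∨ N + M ≤ n' := by
  obtain ⟨k, hk⟩ := h
  obtain ⟨m, hm⟩ := hM
  omega

/-- Core nesting lemma: if `j' ≤ j` and same parity, the smaller interval is
contained in or disjoint from the bigger one. -/
lemma nested_aux {j j' n n' : ℤ} (hle : j' ≤ j) (hpar : n % 2 = n' % 2) :
    Set.Ico ((3:ℝ)^j' * n') ((3:ℝ)^j' * ((n':ℝ) + 2)) ⊆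
      Set.Ico ((3:ℝ)^j * n) ((3:ℝ)^j * ((n:ℝ) + 2)) ∨
    Disjoint (Set.Ico ((3:ℝ)^j * n) ((3:ℝ)^j * ((n:ℝ) + 2)))
      (Set.Ico ((3:ℝ)^j' * n') ((3:ℝ)^j' * ((n':ℝ) + 2))) := by
  set d : ℕ := (j - j').toNat with hd
  have hjd : j = j' + d := by omega
  set N : ℤ := 3 ^ d * n with hN
  set M : ℤ := 2 * 3 ^ d with hMdef
  have hpow : (3:ℝ)^j = 3^j' * (3:ℝ)^(d:ℕ) := by
    rw [hjd, zpow_add₀ (by norm_num : (3:ℝ) ≠ 0)]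
    norm_num
  have hca : (3:ℝ)^j * n = 3^j' * (N:ℤ) := by
    rw [hpow, hN]; push_cast; ring
  have hcb : (3:ℝ)^j * ((n:ℝ) + 2) = 3^j' * ((N:ℝ) + M) := by
    rw [hpow, hN, hMdef]; push_cast; ring
  have hodd : Odd ((3:ℤ) ^ d) := Odd.pow ⟨1, by ring⟩
  obtain ⟨k, hk⟩ := hodd
  have hev : Even (n' - N) := by
    have h1 : Even (n' - n) := by
      rw [Int.even_iff]
      omega
    have h2 : n' - N = (n' - n) - 2 * (k * n) := by rw [hN, hk]; ring
    rw [h2]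
    exact h1.sub (even_two_mul _)
  have hM2 : 2 ≤ M := by
    have : (1:ℤ) ≤ 3 ^ d := one_le_pow₀ (by norm_num)
    omega
  rcases int_key ⟨3^d, by rw [hMdef]; ring⟩ hM2 hev with ⟨ha, hb⟩ | hc | hc
  · left
    rw [hca, hcb]
    apply Set.Ico_subset_Ico
    · have : (N:ℝ) ≤ n' := by exact_mod_cast ha
      nlinarith [zp j']
    · have : (n':ℝ) + 2 ≤ (N:ℝ) + M := by exact_mod_cast hb
      nlinarith [zp j']
  · right
    rw [hca]
    apply (disj ?_).symm
    have : (n':ℝ) + 2 ≤ N := by exact_mod_cast hc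
    nlinarith [zp j']
  · right
    rw [hcb]
    apply disj
    have : (N:ℝ) + M ≤ n' := by exact_mod_cast hc
    nlinarith [zp j']


lemma isLattice (p : ℤ) : IsTriadicLattice (T p) where
  shape := by
    rintro I ⟨j, n, _, hS⟩
    exact ⟨_, _, endlt j n, hS⟩
  nested_or_disjoint := by
    rintro I hI J hJ
    obtain ⟨j, n, hp, hS⟩ := hI
    obtain ⟨j', n', hp', hS'⟩ := hJ
    subst hS hS'
    have hpar : n % 2 = n' % 2 := by omega
    rcases le_total j' j with h | h
    · rcases nested_aux h hpar with hsub | hd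
      · exact Or.inr (Or.inl hsub)
      · exact Or.inr (Or.inr hd)
    · rcases nested_aux h hpar.symm with hsub | hd
      · exact Or.inl hsub
      · exact Or.inr (Or.inr hd.symm)
  children := by
    intro a b h
    obtain ⟨j, n, hp, ha, hb⟩ := mem_T h
    have e : (3:ℝ)^j = 3^(j-1) * 3 := by
      rw [← zpow_add_one₀ (by norm_num : (3:ℝ) ≠ 0) (j-1)]
      congr 1
      ring
    refine ⟨⟨j-1, 3*n, by omega, ?_⟩, ⟨j-1, 3*n+2, by omega, ?_⟩, ⟨j-1, 3*n+4, by omega, ?_⟩⟩ <;>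
      · congr 1 <;> (subst ha hb; rw [e]; push_cast; ring)
  parent := by
    intro a b h
    obtain ⟨j, n, hp, ha, hb⟩ := mem_T h
    have e : (3:ℝ)^(j+1) = 3^j * 3 := by
      rw [zpow_add_one₀ (by norm_num : (3:ℝ) ≠ 0)]
    obtain ⟨m, r, hnm, hr, hm2⟩ :
        ∃ m r : ℤ, n = 3*m + r ∧ (r = 0 ∨ r = 2 ∨ r = 4) ∧ m % 2 = p := by
      have h3 : n % 3 = 0 ∨ n % 3 = 1 ∨ n % 3 = 2 := by omega
      rcases h3 with h3 | h3 | h3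
      · exact ⟨n/3, 0, by omega, Or.inl rfl, by omega⟩
      · exact ⟨n/3 - 1, 4, by omega, by omega, by omega⟩
      · exact ⟨n/3, 2, by omega, by omega, by omega⟩
    refine ⟨(3:ℝ)^(j+1) * m, (3:ℝ)^(j+1) * ((m:ℝ) + 2), ⟨j+1, m, hm2, rfl⟩, ?_, ?_⟩
    · apply Set.Ico_subset_Ico
      · rw [ha, e]
        have : (3:ℝ) * m ≤ n := by
          have : (3:ℤ) * m ≤ n := by omega
          exact_mod_cast this
        nlinarith [zp j]
      · rw [hb, e]
        have : (n:ℝ) + 2 ≤ 3 * ((m:ℝ) + 2) := by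
          have : n + 2 ≤ 3 * (m + 2) := by omega
          exact_mod_cast this
        nlinarith [zp j]
    · rw [ha, hb, e]
      ring

lemma union_eq : T 0 ∪ T 1 = familyJ := by
  ext S
  constructor
  · rintro (⟨j, n, _, hS⟩ | ⟨j, n, _, hS⟩) <;> exact ⟨j, n, hS⟩
  · rintro ⟨j, n, hS⟩
    have : n % 2 = 0 ∨ n % 2 = 1 := by omega
    rcases this with h | h
    · exact Or.inl ⟨j, n, h, hS⟩
    · exact Or.inr ⟨j, n, h, hS⟩

lemma disjointT : Disjoint (T 0) (T 1) := by
  rw [Set.disjoint_left]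
  rintro S ⟨j, n, h0, hS⟩ hS1
  subst hS
  obtain ⟨j', n', h1, ha, hb⟩ := mem_T hS1
  obtain ⟨-, hn⟩ := rep_unique ha hb
  omega

end TriadicSplit

/-- `𝒥` splits into two disjoint triadic lattices `𝒯¹`, `𝒯²`. -/
theorem familyJ_splits_into_two_triadic_lattices :
    ∃ T₁ T₂ : Set (Set ℝ), IsTriadicLattice T₁ ∧ IsTriadicLattice T₂ ∧
      T₁ ∪ T₂ = familyJ ∧ Disjoint T₁ T₂ := by
  exact ⟨TriadicSplit.T 0, TriadicSplit.T 1, TriadicSplit.isLattice 0, TriadicSplit.isLattice 1,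
    TriadicSplit.union_eq, TriadicSplit.disjointT⟩
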